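/- Let (Z, d₁) be a bounded metric space with base point z ∈ Z and s > 0. Define ρ(x,y) = s·d₁(x,y) / ((d₁(x,z)+s)(d₁(y,z)+s)). Then ρ is a quasi-distance: it is symmetric, vanishes exactly on the diagonal, and satisfies the triangle inequality up to a multiplicative constant, namely ρ(x,y) ≤ C(ρ(x,w) + ρ(w,y)) for all x,y,w ∈ Z with C = (diam(Z)+s)/s. -/

import Mathlib

open Filter Topology Metric

/-- The Bourdon function of the hyperbolic filling:
`ρ(x,y) = s·d₁(x,y)/((d₁(x,z)+s)(d₁(y,z)+s))`. -/
noncomputable def bourdon {Z : Type*} [MetricSpace Z] (z : Z) (s : ℝ) (x y : Z) : ℝ :=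
  s * dist x y / ((dist x z + s) * (dist y z + s))

/-- The Bourdon function `ρ` is a quasi-distance: it is symmetric, vanishes
exactly on the diagonal, and satisfies the triangle inequality up to the
multiplicative constant `C = (diam Z + s)/s`. -/
theorem bourdon_quasiDistance {Z : Type*} [MetricSpace Z]
    (hbdd : Bornology.IsBounded (Set.univ : Set Z))
    (z : Z) (s : ℝ) (hs : 0 < s) :
    (∀ x y : Z, bourdon z s x y = bourdon z s y x) ∧
    (∀ x y : Z, bourdon z s x y = 0 ↔ x = y) ∧
    (∀ x y w : Z, bourdon z s x y ≤
      ((Metric.diam (Set.univ : Set Z) + s) / s) *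
        (bourdon z s x w + bourdon z s w y)) := by
  set D := Metric.diam (Set.univ : Set Z) with hDdef
  have hD : 0 ≤ D := Metric.diam_nonneg
  refine ⟨?_, ?_, ?_⟩
  · intro x y
    unfold bourdon
    rw [dist_comm x y]
    ring
  · intro x y
    unfold bourdon
    have ha : 0 < dist x z + s := by positivity
    have hb : 0 < dist y z + s := by positivity
    rw [div_eq_zero_iff]
    constructor
    · rintro (h | h)
      · rcases mul_eq_zero.1 h with h | h
        · exact absurd h hs.ne'
        · exact dist_eq_zero.1 h
      · exact absurd h (by positivity)
    · intro h
      left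
      simp [h]
  · intro x y w
    unfold bourdon
    have ha : 0 < dist x z + s := by positivity
    have hb : 0 < dist y z + s := by positivity
    have hc : 0 < dist w z + s := by positivity
    have hwD : dist w z ≤ D := Metric.dist_le_diam_of_mem hbdd trivial trivial
    have hkey1 : s * (dist w z + s) ≤ (D + s) * (dist y z + s) := by
      nlinarith [dist_nonneg (x := y) (y := z)]
    have hkey2 : s * (dist w z + s) ≤ (D + s) * (dist x z + s) := by
      nlinarith [dist_nonneg (x := x) (y := z)]
    have hrhs : ((D + s) / s) * (s * dist x w / ((dist x z + s) * (dist w z + s)) +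
        s * dist w y / ((dist w z + s) * (dist y z + s)))
        = (D + s) * dist x w / ((dist x z + s) * (dist w z + s)) +
          (D + s) * dist w y / ((dist w z + s) * (dist y z + s)) := by
      field_simp
    rw [hrhs]
    have step1 : s * dist x y / ((dist x z + s) * (dist y z + s)) ≤
        s * dist x w / ((dist x z + s) * (dist y z + s)) +
        s * dist w y / ((dist x z + s) * (dist y z + s)) := by
      rw [← add_div]
      gcongr
      nlinarith [dist_triangle x w y]
    refine step1.trans (add_le_add ?_ ?_)
    · rw [div_le_div_iff₀ (by positivity) (by positivity)]
      have := mul_le_mul_of_nonneg_left hkey1 (mul_nonneg (dist_nonneg (x := x) (y := w)) ha.le)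
      nlinarith [dist_nonneg (x := x) (y := w)]
    · rw [div_le_div_iff₀ (by positivity) (by positivity)]
      nlinarith [mul_le_mul_of_nonneg_left hkey2 (mul_nonneg (dist_nonneg (x := w) (y := y)) hb.le)]
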